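/- For a linear code C of length n over Z_{p^s}, rank(C) + free-rank(C^⊥) = n, where C^⊥ = {v : ⟨v,w⟩ = 0 for all w ∈ C} with the standard inner product mod p^s, rank(C) is the number of nonzero invariant factors of C, and free-rank is the number of invariant factors equal to p^s. -/

import Mathlib

/-- Pontryagin-type duality: for a finite abelian group `G` killed by `q`,
the number of homomorphisms `G →+ ZMod q` equals `|G|`. -/
lemma card_addMonoidHom_zmod (q : ℕ) [NeZero q] (G : Type*) [AddCommGroup G] [Finite G]
    (hq : ∀ g : G, q • g = 0) : Nat.card (G →+ ZMod q) = Nat.card G := by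
  haveI : IsCyclic (Multiplicative (ZMod q))ˣ :=
    isCyclic_of_surjective (toUnits (G := Multiplicative (ZMod q))).toMonoidHom
      (toUnits (G := Multiplicative (ZMod q))).surjective
  haveI : HasEnoughRootsOfUnity (Multiplicative (ZMod q)) q := by
    constructor
    · refine ⟨Multiplicative.ofAdd (1 : ZMod q), ?_, ?_⟩
      · show Multiplicative.ofAdd (1 : ZMod q) ^ q = 1
        rw [← ofAdd_nsmul]
        simp [nsmul_eq_mul, ZMod.natCast_self]
      · intro l hl
        rw [← ofAdd_nsmul] at hl
        have : (l : ZMod q) = 0 := by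
          have := Multiplicative.ofAdd.injective (hl.trans (ofAdd_zero).symm)
          simpa [nsmul_eq_mul] using this
        exact (ZMod.natCast_eq_zero_iff l q).1 this
    · infer_instance
  have hexp : Monoid.exponent (Multiplicative G) ∣ q := by
    refine Monoid.exponent_dvd_of_forall_pow_eq_one fun g => ?_
    rw [← ofAdd_toAdd g, ← ofAdd_nsmul, hq, ofAdd_zero]
  haveI := HasEnoughRootsOfUnity.of_dvd (Multiplicative (ZMod q)) hexp
  obtain ⟨e⟩ := CommGroup.monoidHom_mulEquiv_of_hasEnoughRootsOfUnity (Multiplicative G)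
      (Multiplicative (ZMod q))
  have e2 : (Multiplicative G →* Multiplicative (ZMod q)) ≃
      (Multiplicative G →* (Multiplicative (ZMod q))ˣ) :=
    { toFun := fun h => (toUnits (G := Multiplicative (ZMod q))).toMonoidHom.comp h
      invFun := fun h => (toUnits (G := Multiplicative (ZMod q))).symm.toMonoidHom.comp h
      left_inv := fun h => by ext x; simp
      right_inv := fun h => by ext x; simp }
  calc Nat.card (G →+ ZMod q)
      = Nat.card (Multiplicative G →* Multiplicative (ZMod q)) :=
        Nat.card_congr AddMonoidHom.toMultiplicative
    _ = Nat.card (Multiplicative G →* (Multiplicative (ZMod q))ˣ) := Nat.card_congr e2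
    _ = Nat.card (Multiplicative G) := Nat.card_congr e.toEquiv
    _ = Nat.card G := rfl

open Submodule LinearMap

variable (q n : ℕ)

/-- The dual code (orthogonal complement w.r.t. the standard dot product). -/
def perpCode (A : Submodule (ZMod q) (Fin n → ZMod q)) : Submodule (ZMod q) (Fin n → ZMod q) where
  carrier := {v | ∀ w ∈ A, ∑ i, v i * w i = 0}
  zero_mem' := by simp
  add_mem' := by
    intro a b ha hb w hw
    have h1 := ha w hw
    have h2 := hb w hw
    simp [Pi.add_apply, add_mul, Finset.sum_add_distrib, h1, h2]
  smul_mem' := by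
    intro c v hv w hw
    have h1 := hv w hw
    simp [Pi.smul_apply, smul_eq_mul, mul_assoc, ← Finset.mul_sum, h1]

lemma mem_perpCode {A : Submodule (ZMod q) (Fin n → ZMod q)} {v : Fin n → ZMod q} :
    v ∈ perpCode q n A ↔ ∀ w ∈ A, ∑ i, v i * w i = 0 := Iff.rfl

/-- Dot product with a fixed vector, as a linear map. -/
def dotL (v : Fin n → ZMod q) : (Fin n → ZMod q) →ₗ[ZMod q] ZMod q where
  toFun w := ∑ i, v i * w i
  map_add' a b := by simp [Pi.add_apply, mul_add, Finset.sum_add_distrib]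
  map_smul' c a := by simp [Pi.smul_apply, smul_eq_mul, Finset.mul_sum, mul_left_comm]

lemma dot_expand (g : (Fin n → ZMod q) →ₗ[ZMod q] ZMod q) (w : Fin n → ZMod q) :
    ∑ i, g (fun j => if i = j then 1 else 0) * w i = g w := by
  rw [LinearMap.pi_apply_eq_sum_univ g w]
  refine Finset.sum_congr rfl fun i _ => ?_
  rw [smul_eq_mul, mul_comm]

lemma quot_dot (A : Submodule (ZMod q) (Fin n → ZMod q))
    (g : ((Fin n → ZMod q) ⧸ A) →+ ZMod q) (w : Fin n → ZMod q) :
    ∑ i, g (A.mkQ (fun j => if i = j then 1 else 0)) * w i = g (A.mkQ w) :=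
  dot_expand q n ((g.toZModLinearMap q).comp A.mkQ) w

/-- The dual code is in bijection with homomorphisms from the quotient. -/
noncomputable def perpCodeEquiv (A : Submodule (ZMod q) (Fin n → ZMod q)) :
    (((Fin n → ZMod q) ⧸ A) →+ ZMod q) ≃ perpCode q n A where
  toFun g := ⟨fun i => g (A.mkQ (fun j => if i = j then 1 else 0)), by
    intro w hw
    rw [quot_dot, show A.mkQ w = 0 by rwa [Submodule.mkQ_apply, Submodule.Quotient.mk_eq_zero],
      map_zero]⟩
  invFun v := (A.liftQ (dotL q n v.1) (fun w hw => v.2 w hw)).toAddMonoidHom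
  left_inv g := by
    ext x
    obtain ⟨w, rfl⟩ := A.mkQ_surjective x
    simp only [LinearMap.toAddMonoidHom_coe, Submodule.mkQ_apply, Submodule.liftQ_apply]
    exact quot_dot q n A g w
  right_inv v := by
    refine Subtype.ext (funext fun i => ?_)
    simp only [LinearMap.toAddMonoidHom_coe, Submodule.mkQ_apply, Submodule.liftQ_apply]
    show ∑ j, v.1 j * (if i = j then 1 else 0) = v.1 i
    simp [mul_ite]

lemma card_mul_card_perpCode [NeZero q] (A : Submodule (ZMod q) (Fin n → ZMod q)) :
    Nat.card A * Nat.card (perpCode q n A) = q ^ n := by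
  have hfin : Nat.card (Fin n → ZMod q) = q ^ n := by
    rw [Nat.card_eq_fintype_card, Fintype.card_fun, ZMod.card, Fintype.card_fin]
  have h1 : Nat.card (perpCode q n A) = Nat.card ((Fin n → ZMod q) ⧸ A) := by
    rw [← Nat.card_congr (perpCodeEquiv q n A)]
    exact card_addMonoidHom_zmod q _ fun g => by
      rw [← Nat.cast_smul_eq_nsmul (ZMod q), ZMod.natCast_self, zero_smul]
  rw [h1, ← hfin]
  exact (Submodule.card_eq_card_quotient_mul_card A).symm

lemma le_perpCode_perpCode (A : Submodule (ZMod q) (Fin n → ZMod q)) :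
    A ≤ perpCode q n (perpCode q n A) := by
  intro a ha v hv
  rw [show ∑ i, a i * v i = ∑ i, v i * a i from Finset.sum_congr rfl fun i _ => mul_comm _ _]
  exact hv a ha

lemma perpCode_perpCode [NeZero q] (A : Submodule (ZMod q) (Fin n → ZMod q)) :
    perpCode q n (perpCode q n A) = A := by
  have h1 := card_mul_card_perpCode q n A
  have h2 := card_mul_card_perpCode q n (perpCode q n A)
  have hpos : 0 < Nat.card (perpCode q n A) := Nat.card_pos
  have hcard : Nat.card (perpCode q n (perpCode q n A)) = Nat.card A :=
    Nat.eq_of_mul_eq_mul_left hpos (by rw [h2, mul_comm]; exact h1.symm)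
  refine (SetLike.coe_injective (Set.eq_of_subset_of_ncard_le
    (le_perpCode_perpCode q n A) ?_ (Set.toFinite _))).symm
  rw [← Nat.card_coe_set_eq, ← Nat.card_coe_set_eq]
  exact le_of_eq (by simpa using hcard)

lemma perpCode_sup (A B : Submodule (ZMod q) (Fin n → ZMod q)) :
    perpCode q n (A ⊔ B) = perpCode q n A ⊓ perpCode q n B := by
  ext v
  constructor
  · intro hv
    exact ⟨fun w hw => hv w (le_sup_left (a := A) (b := B) hw),
      fun w hw => hv w (le_sup_right (a := A) (b := B) hw)⟩
  · rintro ⟨h1, h2⟩ w hw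
    obtain ⟨a, ha, b, hb, rfl⟩ := Submodule.mem_sup.1 hw
    simp [Pi.add_apply, mul_add, Finset.sum_add_distrib, h1 a ha, h2 b hb]
lemma zmod_pow_mul_eq_zero_iff (p s a : ℕ) (hp : p.Prime) (ha : a ≤ s)
    (x : ZMod (p ^ s)) :
    (p : ZMod (p ^ s)) ^ a * x = 0 ↔ ∃ y, x = (p : ZMod (p ^ s)) ^ (s - a) * y := by
  haveI : NeZero (p ^ s) := ⟨pow_ne_zero s hp.ne_zero⟩
  constructor
  · intro h
    have hx : ((x.val : ℕ) : ZMod (p ^ s)) = x := ZMod.natCast_rightInverse x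
    have h2 : ((p ^ a * x.val : ℕ) : ZMod (p ^ s)) = 0 := by push_cast [hx]; exact h
    rw [ZMod.natCast_eq_zero_iff] at h2
    have h3 : p ^ (s - a) ∣ x.val := by
      have h4 : p ^ a * p ^ (s - a) ∣ p ^ a * x.val := by
        rw [← pow_add, Nat.add_sub_cancel' ha]; exact h2
      exact (Nat.mul_dvd_mul_iff_left (pow_pos hp.pos a)).1 h4
    obtain ⟨m, hm⟩ := h3
    exact ⟨(m : ZMod (p ^ s)), by rw [← hx, hm]; push_cast; ring⟩
  · rintro ⟨y, rfl⟩
    rw [← mul_assoc, ← pow_add, Nat.add_sub_cancel' ha, ← Nat.cast_pow, ZMod.natCast_self,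
      zero_mul]

lemma zmod_p_pow_s (p s : ℕ) (hs : 1 ≤ s) :
    (p : ZMod (p ^ s)) * (p : ZMod (p ^ s)) ^ (s - 1) = 0 := by
  rw [← pow_succ', show s - 1 + 1 = s from by omega, ← Nat.cast_pow, ZMod.natCast_self]

/-- The kernel of multiplication by `p` on `(ZMod (p^s))^n` has cardinality `p^n`. -/
lemma card_ker_lsmul_p (p s n : ℕ) (hp : p.Prime) (hs : 1 ≤ s) :
    Nat.card (LinearMap.ker
      (LinearMap.lsmul (ZMod (p ^ s)) (Fin n → ZMod (p ^ s)) (p : ZMod (p ^ s)))) = p ^ n := by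
  haveI : NeZero (p ^ s) := ⟨pow_ne_zero s hp.ne_zero⟩
  haveI : NeZero p := ⟨hp.ne_zero⟩
  have e1 : ↥(LinearMap.ker
      (LinearMap.lsmul (ZMod (p ^ s)) (Fin n → ZMod (p ^ s)) (p : ZMod (p ^ s)))) ≃
      (Fin n → {x : ZMod (p ^ s) // (p : ZMod (p ^ s)) * x = 0}) :=
    { toFun := fun v i => ⟨v.1 i, by
        have h2 := congrFun (LinearMap.mem_ker.1 v.2) i
        simpa only [LinearMap.lsmul_apply, Pi.smul_apply, smul_eq_mul, Pi.zero_apply] using h2⟩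
      invFun := fun u => ⟨fun i => (u i).1, by
        rw [LinearMap.mem_ker]
        funext i
        simpa using (u i).2⟩
      left_inv := fun v => rfl
      right_inv := fun u => rfl }
  have e2 : ZMod p ≃ {x : ZMod (p ^ s) // (p : ZMod (p ^ s)) * x = 0} := by
    have hps : (p : ZMod (p ^ s)) * (p : ZMod (p ^ s)) ^ (s - 1) = 0 := zmod_p_pow_s p s hs
    refine Equiv.ofBijective
      (fun y => ⟨(p : ZMod (p ^ s)) ^ (s - 1) * ((y.val : ℕ) : ZMod (p ^ s)), by
        rw [← mul_assoc, hps, zero_mul]⟩) ⟨?_, ?_⟩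
    · intro y z h
      simp only [Subtype.mk.injEq] at h
      have h2 : ((p ^ (s - 1) * y.val : ℕ) : ZMod (p ^ s)) =
          ((p ^ (s - 1) * z.val : ℕ) : ZMod (p ^ s)) := by push_cast; exact h
      rw [ZMod.natCast_eq_natCast_iff] at h2
      have h3 := h2.cancel_left_div_gcd (pow_pos hp.pos s)
      rw [Nat.gcd_eq_right (pow_dvd_pow p (by omega)),
        Nat.pow_div (by omega) hp.pos, show s - (s - 1) = 1 from by omega, pow_one] at h3
      have h4 : y.val = z.val := by
        rwa [Nat.ModEq, Nat.mod_eq_of_lt (ZMod.val_lt y), Nat.mod_eq_of_lt (ZMod.val_lt z)] at h3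
      exact ZMod.val_injective p h4
    · rintro ⟨x, hx⟩
      obtain ⟨y, hy⟩ := (zmod_pow_mul_eq_zero_iff p s 1 hp hs x).1 (by simpa using hx)
      refine ⟨((y.val : ℕ) : ZMod p), Subtype.ext ?_⟩
      have hv : ((y.val : ℕ) : ZMod p).val = y.val % p := ZMod.val_natCast _ _
      have hyy : ((y.val : ℕ) : ZMod (p ^ s)) = y := ZMod.natCast_rightInverse y
      have hdecomp : (y.val : ℕ) = p * (y.val / p) + y.val % p := (Nat.div_add_mod y.val p).symm
      have key : (p : ZMod (p ^ s)) ^ (s - 1) * ((y.val : ℕ) : ZMod (p ^ s)) =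
          (p : ZMod (p ^ s)) ^ (s - 1) * ((y.val % p : ℕ) : ZMod (p ^ s)) := by
        conv_lhs => rw [hdecomp]
        push_cast
        rw [mul_add, ← mul_assoc, mul_comm ((p : ZMod (p ^ s)) ^ (s - 1)) (p : ZMod (p ^ s)),
          hps, zero_mul, zero_add]
      show (p : ZMod (p ^ s)) ^ (s - 1) * _ = x
      rw [hv, hy, ← key, hyy]
  rw [Nat.card_congr e1, Nat.card_fun, Nat.card_eq_fintype_card (α := Fin n), Fintype.card_fin,
    ← Nat.card_congr e2, Nat.card_eq_fintype_card, ZMod.card]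
open Submodule LinearMap in
lemma card_map_mul_card_inf_ker {R M : Type*} [CommRing R] [AddCommGroup M] [Module R M]
    [Finite M] (f : M →ₗ[R] M) (A : Submodule R M) :
    Nat.card (A.map f) * Nat.card (A ⊓ LinearMap.ker f : Submodule R M) = Nat.card A := by
  have h1 := Submodule.card_eq_card_quotient_mul_card (LinearMap.ker (f.domRestrict A))
  have e := (f.domRestrict A).quotKerEquivRange
  have h2 : Nat.card (LinearMap.range (f.domRestrict A)) = Nat.card (A.map f) := by
    rw [LinearMap.range_domRestrict]
  have h3 : Nat.card (LinearMap.ker (f.domRestrict A)) =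
      Nat.card (A ⊓ LinearMap.ker f : Submodule R M) := by
    refine Nat.card_congr ⟨fun x => ⟨x.1.1, Submodule.mem_inf.2 ⟨x.1.2, ?_⟩⟩,
      fun y => ⟨⟨y.1, (Submodule.mem_inf.1 y.2).1⟩, ?_⟩, fun x => rfl, fun y => rfl⟩
    · exact LinearMap.mem_ker.1 x.2
    · exact LinearMap.mem_ker.2 ((Submodule.mem_inf.1 y.2).2)
  rw [h1, h3, Nat.card_congr e.toEquiv, h2]
  ring

open Submodule LinearMap in
lemma card_sup_mul_card_inf {R M : Type*} [CommRing R] [AddCommGroup M] [Module R M]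
    [Finite M] (A B : Submodule R M) :
    Nat.card (A ⊔ B : Submodule R M) * Nat.card (A ⊓ B : Submodule R M) =
      Nat.card A * Nat.card B := by
  have h1 := Submodule.card_eq_card_quotient_mul_card (comap A.subtype (A ⊓ B))
  have h2 := Submodule.card_eq_card_quotient_mul_card (comap (A ⊔ B).subtype B)
  have e1 : Nat.card (comap A.subtype (A ⊓ B)) = Nat.card (A ⊓ B : Submodule R M) :=
    Nat.card_congr (Submodule.comapSubtypeEquivOfLe (inf_le_left : A ⊓ B ≤ A)).toEquiv
  have e2 : Nat.card (comap (A ⊔ B).subtype B) = Nat.card B :=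
    Nat.card_congr (Submodule.comapSubtypeEquivOfLe (le_sup_right : B ≤ A ⊔ B)).toEquiv
  have e3 : Nat.card (↥A ⧸ comap A.subtype (A ⊓ B)) =
      Nat.card (↥(A ⊔ B) ⧸ comap (A ⊔ B).subtype B) :=
    Nat.card_congr (LinearMap.quotientInfEquivSupQuotient A B).toEquiv
  rw [h2, e2, ← e3, h1, e1]
  ring

open Submodule LinearMap in
lemma perpCode_ker (p s n : ℕ) (hp : p.Prime) (hs : 1 ≤ s) :
    perpCode (p ^ s) n (LinearMap.ker
        (LinearMap.lsmul (ZMod (p ^ s)) (Fin n → ZMod (p ^ s)) (p : ZMod (p ^ s)))) =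
      LinearMap.ker (LinearMap.lsmul (ZMod (p ^ s)) (Fin n → ZMod (p ^ s))
        ((p : ZMod (p ^ s)) ^ (s - 1))) := by
  have hps : (p : ZMod (p ^ s)) * (p : ZMod (p ^ s)) ^ (s - 1) = 0 := zmod_p_pow_s p s hs
  ext v
  constructor
  · intro hv
    rw [LinearMap.mem_ker]
    funext i
    have hw : (fun j => if i = j then (p : ZMod (p ^ s)) ^ (s - 1) else 0) ∈
        LinearMap.ker (LinearMap.lsmul (ZMod (p ^ s)) (Fin n → ZMod (p ^ s))
          (p : ZMod (p ^ s))) := by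
      rw [LinearMap.mem_ker]
      funext j
      simp only [LinearMap.lsmul_apply, Pi.smul_apply, smul_eq_mul, Pi.zero_apply, mul_ite,
        mul_zero, hps]
      split <;> rfl
    have := hv _ hw
    simp only [mul_ite, mul_zero, Finset.sum_ite_eq, Finset.mem_univ, if_true] at this
    simpa [mul_comm] using this
  · intro hv w hw
    rw [LinearMap.mem_ker] at hv
    rw [LinearMap.mem_ker] at hw
    refine Finset.sum_eq_zero fun i _ => ?_
    have hvi : (p : ZMod (p ^ s)) ^ (s - 1) * v i = 0 := by
      simpa using congrFun hv i
    have hwi : (p : ZMod (p ^ s)) * w i = 0 := by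
      simpa using congrFun hw i
    obtain ⟨a, ha⟩ := (zmod_pow_mul_eq_zero_iff p s (s - 1) hp (by omega) (v i)).1 hvi
    obtain ⟨b, hb⟩ := (zmod_pow_mul_eq_zero_iff p s 1 hp hs (w i)).1 (by simpa using hwi)
    rw [ha, hb, show s - (s - 1) = 1 from by omega, pow_one]
    rw [show (p : ZMod (p ^ s)) * a * ((p : ZMod (p ^ s)) ^ (s - 1) * b) =
      ((p : ZMod (p ^ s)) * (p : ZMod (p ^ s)) ^ (s - 1)) * (a * b) from by ring, hps, zero_mul]


/-- `rank(C) + free-rank(C^⊥) = n` for a linear code `C ⊆ (ZMod (p^s))^n`.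
Here `rank(C) = r` is characterized by `|C| = |pC| · p^r` (the number of nonzero
invariant factors), and `free-rank(C^⊥) = f` is characterized by
`|p^(s-1)·C^⊥| = p^f` (the number of invariant factors equal to `p^s`), and
`C^⊥` is the dual with respect to the standard inner product mod `p^s`. -/
theorem rank_add_freeRank_dual (p s n r f : ℕ) (hp : p.Prime) (hs : 1 ≤ s)
    (C Cd : Submodule (ZMod (p ^ s)) (Fin n → ZMod (p ^ s)))
    (hCd : (Cd : Set (Fin n → ZMod (p ^ s))) =
      {v | ∀ w ∈ C, ∑ i, v i * w i = 0})
    (hr : Nat.card C =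
      Nat.card (Submodule.map
        (LinearMap.lsmul (ZMod (p ^ s)) (Fin n → ZMod (p ^ s)) (p : ZMod (p ^ s))) C) *
        p ^ r)
    (hf : Nat.card (Submodule.map
        (LinearMap.lsmul (ZMod (p ^ s)) (Fin n → ZMod (p ^ s))
          ((p : ZMod (p ^ s)) ^ (s - 1))) Cd) = p ^ f) :
    r + f = n := by
  haveI : NeZero (p ^ s) := ⟨pow_ne_zero s hp.ne_zero⟩
  set R := ZMod (p ^ s) with hR
  set M := Fin n → R with hM
  set K1 := LinearMap.ker (LinearMap.lsmul R M (p : R)) with hK1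
  set K2 := LinearMap.ker (LinearMap.lsmul R M ((p : R) ^ (s - 1))) with hK2
  have hCd' : Cd = perpCode (p ^ s) n C := SetLike.coe_injective (by rw [hCd]; rfl)
  -- rank: p ^ r = |C ⊓ K1|
  have h_r : Nat.card (C ⊓ K1 : Submodule R M) = p ^ r := by
    have h1 := card_map_mul_card_inf_ker (LinearMap.lsmul R M (p : R)) C
    rw [hr] at h1
    exact Nat.eq_of_mul_eq_mul_left Nat.card_pos h1
  -- free rank: p ^ f * |Cd ⊓ K2| = |Cd|
  have h_f : p ^ f * Nat.card (Cd ⊓ K2 : Submodule R M) = Nat.card Cd := by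
    have h2 := card_map_mul_card_inf_ker (LinearMap.lsmul R M ((p : R) ^ (s - 1))) Cd
    rwa [hf] at h2
  -- duality: |Cd ⊓ K2| * |C ⊔ K1| = (p^s)^n
  have hpk : perpCode (p ^ s) n K1 = K2 := perpCode_ker p s n hp hs
  have hsup : perpCode (p ^ s) n (C ⊔ K1) = Cd ⊓ K2 := by
    rw [perpCode_sup, ← hCd', hpk]
  have hdd : perpCode (p ^ s) n (Cd ⊓ K2 : Submodule R M) = C ⊔ K1 := by
    rw [← hsup, perpCode_perpCode]
  have h_quad : Nat.card (Cd ⊓ K2 : Submodule R M) * Nat.card (C ⊔ K1 : Submodule R M) =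
      (p ^ s) ^ n := by
    have h3 := card_mul_card_perpCode (p ^ s) n (Cd ⊓ K2 : Submodule R M)
    rwa [hdd] at h3
  have h_CCd : Nat.card C * Nat.card Cd = (p ^ s) ^ n := by
    have h4 := card_mul_card_perpCode (p ^ s) n C
    rwa [← hCd'] at h4
  have h_si : Nat.card (C ⊔ K1 : Submodule R M) * Nat.card (C ⊓ K1 : Submodule R M) =
      Nat.card C * Nat.card K1 := card_sup_mul_card_inf C K1
  have h_K1 : Nat.card K1 = p ^ n := card_ker_lsmul_p p s n hp hs
  have chain : p ^ (f + r) * (p ^ s) ^ n = p ^ n * (p ^ s) ^ n := by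
    calc p ^ (f + r) * (p ^ s) ^ n
        = p ^ f * (p ^ r * (p ^ s) ^ n) := by rw [pow_add]; ring
      _ = p ^ f * (Nat.card (C ⊓ K1 : Submodule R M) *
            (Nat.card (Cd ⊓ K2 : Submodule R M) * Nat.card (C ⊔ K1 : Submodule R M))) := by
          rw [h_r, h_quad]
      _ = (p ^ f * Nat.card (Cd ⊓ K2 : Submodule R M)) *
            (Nat.card (C ⊔ K1 : Submodule R M) * Nat.card (C ⊓ K1 : Submodule R M)) := by ring
      _ = Nat.card Cd * (Nat.card C * Nat.card K1) := by rw [h_f, h_si]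
      _ = (Nat.card C * Nat.card Cd) * p ^ n := by rw [h_K1]; ring
      _ = p ^ n * (p ^ s) ^ n := by rw [h_CCd]; ring
  have hpow : p ^ (f + r) = p ^ n :=
    Nat.eq_of_mul_eq_mul_right (pow_pos (pow_pos hp.pos s) n) chain
  have := Nat.pow_right_injective hp.two_le hpow
  omega
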